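/- Define ℓ(k) = padicValNat 2 k + 1 for k ≥ 1 and r_n = ∑_{k=1}^{n} ℓ(k). Then for every m ≥ 1, the set {r_n : n ∈ ℕ, ℓ(n) = m} has strictly positive lower density in ℕ; in fact its lower density is at least 2^{−m−1}. -/

import Mathlib

open scoped Classical

def ell (k : ℕ) : ℕ := padicValNat 2 k + 1

def r (n : ℕ) : ℕ := ∑ k ∈ Finset.Icc 1 n, ell k

noncomputable def lowerDensity (A : Set ℕ) : ℝ :=
  Filter.atTop.liminf fun N : ℕ =>
    (((Finset.range (N + 1)).filter (fun n => n ∈ A)).card : ℝ) / (N + 1)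

noncomputable def upperDensity (A : Set ℕ) : ℝ :=
  Filter.atTop.limsup fun N : ℕ =>
    (((Finset.range (N + 1)).filter (fun n => n ∈ A)).card : ℝ) / (N + 1)

lemma ell_pos (k : ℕ) : 1 ≤ ell k := Nat.le_add_left 1 _

lemma r_succ (n : ℕ) : r (n + 1) = r n + ell (n + 1) := by
  unfold r
  rw [← Finset.sum_Icc_succ_top (by omega : 1 ≤ n + 1)]

lemma r_strictMono : StrictMono r :=
  strictMono_nat_of_lt_succ fun n => by
    rw [r_succ]; have := ell_pos (n + 1); omega

lemma ell_odd (n : ℕ) : ell (2 * n + 1) = 1 := by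
  unfold ell
  rw [padicValNat.eq_zero_of_not_dvd (by omega)]

lemma ell_two_mul (n : ℕ) (hn : n ≠ 0) : ell (2 * n) = ell n + 1 := by
  haveI : Fact (Nat.Prime 2) := ⟨Nat.prime_two⟩
  unfold ell
  rw [padicValNat.mul (by norm_num) hn, padicValNat.self (by norm_num)]
  omega

lemma r_two_mul (n : ℕ) : r (2 * n) = 2 * n + r n := by
  induction n with
  | zero => simp [r]
  | succ k ih =>
      have h1 : 2 * (k + 1) = (2 * k + 1) + 1 := by ring
      rw [h1, r_succ, r_succ, ell_odd]
      have h2 : (2 * k + 1 + 1) = 2 * (k + 1) := by ring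
      rw [h2, ell_two_mul (k + 1) (by omega), r_succ]
      omega

lemma r_lt (n : ℕ) (hn : 1 ≤ n) : r n < 2 * n := by
  induction n using Nat.strong_induction_on with
  | _ n ih =>
    rcases Nat.even_or_odd n with ⟨k, hk⟩ | ⟨k, hk⟩
    · have hk1 : 1 ≤ k := by omega
      have hkn : k < n := by omega
      have := ih k hkn hk1
      have h2 : n = 2 * k := by omega
      rw [h2, r_two_mul]; omega
    · rcases Nat.eq_zero_or_pos k with h0 | hkpos
      · have : n = 1 := by omega
        subst this
        have : r 1 = 1 := by simp [r, ell]
        omega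
      · have hkn : k < n := by omega
        have := ih k hkn hkpos
        have h2 : n = 2 * k + 1 := by omega
        rw [h2, r_succ, r_two_mul, ell_odd]
        omega

lemma key_count (m N : ℕ) (hm : 1 ≤ m) :
    N / 2 ^ (m + 1) ≤
      ((Finset.range (N + 1)).filter
        (fun x => x ∈ {x | ∃ n : ℕ, 0 < n ∧ ell n = m ∧ r n = x})).card := by
  classical
  haveI : Fact (Nat.Prime 2) := ⟨Nat.prime_two⟩
  have hmain := Finset.card_le_card_of_injOn
      (f := fun j => r (2 ^ (m - 1) * (2 * j + 1)))
      (s := Finset.range (N / 2 ^ (m + 1)))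
      (t := (Finset.range (N + 1)).filter
        (fun x => x ∈ {x | ∃ n : ℕ, 0 < n ∧ ell n = m ∧ r n = x}))
      ?_ ?_
  · simpa using hmain
  · intro j hj
    rw [Finset.mem_coe, Finset.mem_range] at hj
    set nj := 2 ^ (m - 1) * (2 * j + 1) with hnj
    have hnjpos : 0 < nj := by positivity
    have hpow : 2 * 2 ^ (m - 1) = 2 ^ m := by
      rw [← pow_succ']
      congr 1
      omega
    have h2nj : 2 * nj < N := by
      have hb : 2 ^ (m + 1) * (N / 2 ^ (m + 1)) ≤ N := Nat.mul_div_le N _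
      have hc : 2 * nj = 2 ^ m * (2 * j + 1) := by
        rw [hnj, ← mul_assoc, hpow]
      have hd : 2 ^ m * (2 * j + 1) < 2 ^ m * (2 * (j + 1)) :=
        mul_lt_mul_of_pos_left (by omega) (by positivity)
      have he : 2 ^ m * (2 * (j + 1)) = 2 ^ (m + 1) * (j + 1) := by
        rw [pow_succ]; ring
      have hf : 2 ^ (m + 1) * (j + 1) ≤ 2 ^ (m + 1) * (N / 2 ^ (m + 1)) := by
        apply Nat.mul_le_mul_left
        omega
      omega
    have hr : r nj < 2 * nj := r_lt nj hnjpos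
    rw [Finset.mem_coe, Finset.mem_filter, Finset.mem_range]
    constructor
    · show r nj < N + 1
      omega
    · show r nj ∈ {x | ∃ n : ℕ, 0 < n ∧ ell n = m ∧ r n = x}
      refine ⟨nj, hnjpos, ?_, rfl⟩
      unfold ell
      rw [hnj, padicValNat.mul (by positivity) (by omega),
        padicValNat.prime_pow, padicValNat.eq_zero_of_not_dvd (by omega)]
      omega
  · intro j1 _ j2 _ h
    have := r_strictMono.injective h
    have := Nat.eq_of_mul_eq_mul_left (by positivity : 0 < 2 ^ (m - 1)) this
    omega

theorem lowerDensity_r_ell (m : ℕ) (hm : 1 ≤ m) :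
    0 < lowerDensity {x | ∃ n : ℕ, 0 < n ∧ ell n = m ∧ r n = x} ∧
    ((2 : ℝ) ^ (m + 1))⁻¹ ≤ lowerDensity {x | ∃ n : ℕ, 0 < n ∧ ell n = m ∧ r n = x} := by
  classical
  set A : Set ℕ := {x | ∃ n : ℕ, 0 < n ∧ ell n = m ∧ r n = x} with hA
  set c : ℝ := ((2 : ℝ) ^ (m + 1))⁻¹ with hc
  have hcpos : 0 < c := by positivity
  have hc1 : c ≤ 1 := by
    rw [hc]
    rw [inv_le_one_iff₀]
    right
    exact one_le_pow₀ (by norm_num)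
  set f : ℕ → ℝ := fun N : ℕ =>
    (((Finset.range (N + 1)).filter (fun n => n ∈ A)).card : ℝ) / (N + 1) with hf
  set g : ℕ → ℝ := fun N : ℕ => c - 2 * (1 / (N + 1)) with hgdef
  have hg : Filter.Tendsto g Filter.atTop (nhds c) := by
    have := (tendsto_one_div_add_atTop_nhds_zero_nat).const_mul (2 : ℝ)
    have h2 := (tendsto_const_nhds (x := c) (f := Filter.atTop (α := ℕ))).sub this
    show Filter.Tendsto (fun N : ℕ => c - 2 * (1 / ((N : ℝ) + 1))) Filter.atTop (nhds c)
    simpa [one_div] using h2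
  have hpt : ∀ N : ℕ, g N ≤ f N := by
    intro N
    have hTcard := key_count m N hm
    have hN1 : (0 : ℝ) < (N : ℝ) + 1 := by positivity
    have hcard : ((N / 2 ^ (m + 1) : ℕ) : ℝ) ≤
        (((Finset.range (N + 1)).filter (fun n => n ∈ A)).card : ℝ) := by
      exact_mod_cast hTcard
    have hlow : (N : ℝ) * c - 1 ≤ ((N / 2 ^ (m + 1) : ℕ) : ℝ) := by
      have h1 : N < (N / 2 ^ (m + 1) + 1) * 2 ^ (m + 1) := by
        have hdm := Nat.div_add_mod N (2 ^ (m + 1))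
        have hmod : N % 2 ^ (m + 1) < 2 ^ (m + 1) := Nat.mod_lt _ (by positivity)
        have hrng : (N / 2 ^ (m + 1) + 1) * 2 ^ (m + 1)
            = 2 ^ (m + 1) * (N / 2 ^ (m + 1)) + 2 ^ (m + 1) := by ring
        omega
      have h2 : (N : ℝ) < ((N / 2 ^ (m + 1) : ℕ) + 1) * (2 : ℝ) ^ (m + 1) := by
        exact_mod_cast h1
      have hpow : (0 : ℝ) < (2 : ℝ) ^ (m + 1) := by positivity
      rw [hc]
      rw [sub_le_iff_le_add, mul_inv_le_iff₀ hpow]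
      nlinarith
    show c - 2 * (1 / ((N : ℝ) + 1)) ≤
      (((Finset.range (N + 1)).filter (fun n => n ∈ A)).card : ℝ) / ((N : ℝ) + 1)
    rw [le_div_iff₀ hN1]
    have hexp : (c - 2 * (1 / ((N : ℝ) + 1))) * ((N : ℝ) + 1) = c * (N : ℝ) + c - 2 := by
      field_simp
    rw [hexp]
    nlinarith [hcard, hlow, hcpos, hc1]
  have hfl : lowerDensity A = Filter.atTop.liminf f := rfl
  have hgbdd : Filter.IsBoundedUnder (· ≥ ·) Filter.atTop g :=
    hg.isBoundedUnder_ge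
  have hfub : Filter.IsBoundedUnder (· ≤ ·) Filter.atTop f :=
    Filter.isBoundedUnder_of ⟨1, fun N => by
      show (((Finset.range (N + 1)).filter (fun n => n ∈ A)).card : ℝ) / ((N : ℝ) + 1) ≤ 1
      rw [div_le_one (by positivity)]
      have := Finset.card_filter_le (Finset.range (N + 1)) (fun n => n ∈ A)
      have h2 : ((Finset.range (N + 1)).card : ℝ) = (N : ℝ) + 1 := by
        simp
      calc (((Finset.range (N + 1)).filter (fun n => n ∈ A)).card : ℝ)
          ≤ ((Finset.range (N + 1)).card : ℝ) := by exact_mod_cast this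
        _ = (N : ℝ) + 1 := h2⟩
  have hcobdd : Filter.IsCoboundedUnder (· ≥ ·) Filter.atTop f :=
    hfub.isCoboundedUnder_ge
  have hlim : Filter.atTop.liminf g = c := hg.liminf_eq
  have hle : c ≤ lowerDensity A := by
    rw [hfl, ← hlim]
    exact Filter.liminf_le_liminf (Filter.Eventually.of_forall hpt) hgbdd hcobdd
  exact ⟨lt_of_lt_of_le hcpos hle, hle⟩
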